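/- Let f : ℝ → ℝ be differentiable on ℝ with derivative f′ Lebesgue integrable on every compact interval, and suppose the improper integrals ∫_{-∞}^∞ f and ∫_{-∞}^∞ f′ both exist. If y ∈ ℝ is such that f̂(y) = ∫_{-∞}^∞ f(x)e^{−2πixy} dx exists as an improper integral, then the improper integral (f′)^(y) = ∫_{-∞}^∞ f′(x)e^{−2πixy} dx exists and (f′)^(y) = 2πi y · f̂(y). -/

import Mathlib

open MeasureTheory Filter Topology intervalIntegral

/-- The improper integral `∫_{-∞}^∞ h = L` (real-valued). -/
def HasImpInt (h : ℝ → ℝ) (L : ℝ) : Prop :=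
  ∃ L₁ L₂ : ℝ,
    Tendsto (fun c => ∫ x in c..(0:ℝ), h x) atBot (𝓝 L₁) ∧
    Tendsto (fun c => ∫ x in (0:ℝ)..c, h x) atTop (𝓝 L₂) ∧ L = L₁ + L₂

/-- The improper integral `∫_{-∞}^∞ h = z` (complex-valued). -/
def HasImpIntC (h : ℝ → ℂ) (z : ℂ) : Prop :=
  ∃ z₁ z₂ : ℂ,
    Tendsto (fun c => ∫ x in c..(0:ℝ), h x) atBot (𝓝 z₁) ∧
    Tendsto (fun c => ∫ x in (0:ℝ)..c, h x) atTop (𝓝 z₂) ∧ z = z₁ + z₂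

/-- The Fourier kernel `e^{-2πixy}`. -/
noncomputable def fourierKernel (x y : ℝ) : ℂ :=
  Complex.exp (-(2 * Real.pi * Complex.I * x * y))

-- If f → M at top and ∫_0^c f converges, then M = 0.
lemma limit_zero_atTop (f : ℝ → ℝ) (hf : Continuous f) (M L : ℝ)
    (hM : Tendsto f atTop (𝓝 M))
    (hL : Tendsto (fun c => ∫ x in (0:ℝ)..c, f x) atTop (𝓝 L)) : M = 0 := by
  have h1 : Tendsto (fun c => ∫ x in c..(c+1), f x) atTop (𝓝 0) := by
    have := (hL.comp (tendsto_atTop_add_const_right atTop 1 tendsto_id)).sub hL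
    simp only [sub_self] at this
    convert this using 2 with c
    simp only [Function.comp, id]
    rw [← intervalIntegral.integral_add_adjacent_intervals
      (hf.intervalIntegrable 0 c) (hf.intervalIntegrable c (c+1))]
    abel
  have h2 : Tendsto (fun c => ∫ x in c..(c+1), f x) atTop (𝓝 M) := by
    rw [Metric.tendsto_atTop]
    intro ε hε
    rcases (Metric.tendsto_atTop.mp hM (ε/2) (by linarith)) with ⟨a, ha⟩
    refine ⟨a, fun c hc => ?_⟩
    have : (∫ x in c..(c+1), f x) - M = ∫ x in c..(c+1), (f x - M) := by
      rw [intervalIntegral.integral_sub (hf.intervalIntegrable _ _)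
        intervalIntegrable_const, intervalIntegral.integral_const]
      simp
    rw [Real.dist_eq, this]
    have hb : ∀ x ∈ Set.uIoc c (c+1), ‖f x - M‖ ≤ ε/2 := by
      intro x hx
      rw [Set.uIoc_of_le (by linarith)] at hx
      have := ha x (le_trans hc (le_of_lt hx.1))
      rw [Real.dist_eq] at this
      exact le_of_lt this
    have h3 := intervalIntegral.norm_integral_le_of_norm_le_const hb
    rw [show c+1-c = 1 by ring] at h3
    simp only [abs_one, mul_one] at h3
    calc |∫ x in c..(c+1), (f x - M)| ≤ ε/2 := h3
      _ < ε := by linarith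
  exact tendsto_nhds_unique h2 h1

lemma limit_zero_atBot (f : ℝ → ℝ) (hf : Continuous f) (M L : ℝ)
    (hM : Tendsto f atBot (𝓝 M))
    (hL : Tendsto (fun c => ∫ x in c..(0:ℝ), f x) atBot (𝓝 L)) : M = 0 := by
  apply limit_zero_atTop (fun x => f (-x)) (hf.comp continuous_neg) M L
  · exact hM.comp tendsto_neg_atTop_atBot
  · have := hL.comp tendsto_neg_atTop_atBot
    convert this using 2 with c
    simp only [Function.comp]
    rw [show (∫ x in (0:ℝ)..c, f (-x)) = ∫ x in (-c)..(-(0:ℝ)), f x from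
      intervalIntegral.integral_comp_neg f]
    norm_num

lemma fourierKernel_hasDerivAt (y x : ℝ) :
    HasDerivAt (fun x : ℝ => fourierKernel x y)
      (-(2 * Real.pi * Complex.I * y) * fourierKernel x y) x := by
  set c : ℂ := -(2 * Real.pi * Complex.I * y) with hc
  have h0 : ∀ t : ℝ, fourierKernel t y = Complex.exp (c * t) := by
    intro t; unfold fourierKernel; rw [hc]; ring_nf
  have h1 : HasDerivAt (fun z : ℂ => Complex.exp (c * z)) (c * Complex.exp (c * x)) x := by
    have h := ((hasDerivAt_id (x : ℂ)).const_mul c).cexp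
    simpa [mul_comm] using h
  have h2 := h1.comp_ofReal
  rw [h0 x]
  apply h2.congr_of_eventuallyEq
  filter_upwards with t using h0 t

lemma fourierKernel_norm (x y : ℝ) : ‖fourierKernel x y‖ = 1 := by
  unfold fourierKernel
  rw [Complex.norm_exp]
  have h : (-(2 * Real.pi * Complex.I * x * y)).re = 0 := by
    simp
  rw [h, Real.exp_zero]

lemma fourierKernel_continuous (y : ℝ) : Continuous (fun x : ℝ => fourierKernel x y) := by
  unfold fourierKernel
  continuity

lemma fourierKernel_zero (y : ℝ) : fourierKernel 0 y = 1 := by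
  unfold fourierKernel; simp

/-- Integration by parts identity. -/
lemma ibp_key (f f' : ℝ → ℝ) (y : ℝ)
    (hderiv : ∀ x : ℝ, HasDerivAt f (f' x) x)
    (hf'loc : ∀ c d : ℝ, IntervalIntegrable f' volume c d) (c d : ℝ) :
    (∫ x in c..d, (f' x : ℂ) * fourierKernel x y)
      = (f d : ℂ) * fourierKernel d y - (f c : ℂ) * fourierKernel c y
        + (2 * Real.pi * Complex.I * y) * ∫ x in c..d, (f x : ℂ) * fourierKernel x y := by
  set a : ℂ := 2 * Real.pi * Complex.I * y with ha
  have hfc : Continuous f := by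
    rw [continuous_iff_continuousAt]; exact fun x => (hderiv x).continuousAt
  have hf'C : IntervalIntegrable (fun x => (f' x : ℂ)) volume c d :=
    ⟨(hf'loc c d).1.ofReal, (hf'loc c d).2.ofReal⟩
  have hu' : IntervalIntegrable (fun x => (f' x : ℂ) * fourierKernel x y) volume c d :=
    hf'C.mul_continuousOn (fourierKernel_continuous y).continuousOn
  have hv' : IntervalIntegrable (fun x => -a * fourierKernel x y) volume c d :=
    (continuous_const.mul (fourierKernel_continuous y)).intervalIntegrable c d
  have ibp := intervalIntegral.integral_mul_deriv_eq_deriv_mul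
    (u := fun x => (f x : ℂ)) (v := fun x => fourierKernel x y)
    (u' := fun x => (f' x : ℂ)) (v' := fun x => -a * fourierKernel x y)
    (fun x _ => (hderiv x).ofReal_comp) (fun x _ => fourierKernel_hasDerivAt y x) hf'C hv'
  have hmove : (∫ x in c..d, (f x : ℂ) * (-a * fourierKernel x y))
      = -a * ∫ x in c..d, (f x : ℂ) * fourierKernel x y := by
    rw [← intervalIntegral.integral_const_mul]
    apply intervalIntegral.integral_congr
    intro x _; ring
  rw [hmove] at ibp
  rw [ha]
  linear_combination ibp

/-- **Fourier transform of the derivative.** If `f` is differentiable with locally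
integrable derivative `f'`, the improper integrals `∫_{-∞}^∞ f` and `∫_{-∞}^∞ f'` exist,
and `f̂(y)` exists as an improper integral, then `(f')^(y)` exists as an improper
integral and equals `2πiy·f̂(y)`. -/
theorem fourier_transform_of_deriv (f f' : ℝ → ℝ) (y : ℝ) (zf : ℂ)
    (hderiv : ∀ x : ℝ, HasDerivAt f (f' x) x)
    (hf'loc : ∀ c d : ℝ, IntervalIntegrable f' volume c d)
    (hfimp : ∃ L : ℝ, HasImpInt f L)
    (hf'imp : ∃ L : ℝ, HasImpInt f' L)
    (hzf : HasImpIntC (fun x => (f x : ℂ) * fourierKernel x y) zf) :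
    HasImpIntC (fun x => (f' x : ℂ) * fourierKernel x y)
      (2 * Real.pi * Complex.I * y * zf) := by
  obtain ⟨Lf, Lf₁, Lf₂, hLf1, hLf2, _⟩ := hfimp
  obtain ⟨Lg, Lg₁, Lg₂, hg1, hg2, _⟩ := hf'imp
  obtain ⟨z₁, z₂, hz1, hz2, hzsum⟩ := hzf
  set a : ℂ := 2 * Real.pi * Complex.I * y with ha
  have hfc : Continuous f := by
    rw [continuous_iff_continuousAt]; exact fun x => (hderiv x).continuousAt
  have hFTC : ∀ c d : ℝ, (∫ x in c..d, f' x) = f d - f c := fun c d =>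
    intervalIntegral.integral_eq_sub_of_hasDerivAt (fun x _ => hderiv x) (hf'loc c d)
  -- f → 0 at +∞
  have htopM : Tendsto f atTop (𝓝 (Lg₂ + f 0)) := by
    have := hg2.add_const (f 0)
    apply this.congr
    intro c; rw [hFTC 0 c]; ring
  have htop0 : Tendsto f atTop (𝓝 0) := by
    rw [← limit_zero_atTop f hfc _ Lf₂ htopM hLf2]; exact htopM
  -- f → 0 at -∞
  have hbotM : Tendsto f atBot (𝓝 (f 0 - Lg₁)) := by
    have := (hg1.const_sub (f 0))
    apply this.congr
    intro c; rw [hFTC c 0]; ring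
  have hbot0 : Tendsto f atBot (𝓝 0) := by
    rw [← limit_zero_atBot f hfc _ Lf₁ hbotM hLf1]; exact hbotM
  -- boundary terms tend to 0
  have hbdtop : Tendsto (fun c => (f c : ℂ) * fourierKernel c y) atTop (𝓝 0) := by
    rw [tendsto_zero_iff_norm_tendsto_zero]
    have : (fun c => ‖(f c : ℂ) * fourierKernel c y‖) = fun c => |f c| := by
      funext c; rw [norm_mul, fourierKernel_norm, mul_one, Complex.norm_real, Real.norm_eq_abs]
    rw [this]
    simpa using htop0.abs
  have hbdbot : Tendsto (fun c => (f c : ℂ) * fourierKernel c y) atBot (𝓝 0) := by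
    rw [tendsto_zero_iff_norm_tendsto_zero]
    have : (fun c => ‖(f c : ℂ) * fourierKernel c y‖) = fun c => |f c| := by
      funext c; rw [norm_mul, fourierKernel_norm, mul_one, Complex.norm_real, Real.norm_eq_abs]
    rw [this]
    simpa using hbot0.abs
  refine ⟨(f 0 : ℂ) + a * z₁, -(f 0 : ℂ) + a * z₂, ?_, ?_, ?_⟩
  · -- atBot side : ∫_c^0 f'K = f0·K0 - f c K c + a ∫_c^0 fK
    have key : ∀ c : ℝ, (∫ x in c..(0:ℝ), (f' x : ℂ) * fourierKernel x y)
        = (f 0 : ℂ) - (f c : ℂ) * fourierKernel c y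
          + a * ∫ x in c..(0:ℝ), (f x : ℂ) * fourierKernel x y := by
      intro c
      rw [ibp_key f f' y hderiv hf'loc c 0, fourierKernel_zero, mul_one]
    have hlim := (((tendsto_const_nhds :
        Tendsto (fun _ : ℝ => (f 0 : ℂ)) atBot (𝓝 ((f 0 : ℂ)))).sub hbdbot).add
      (hz1.const_mul a))
    simp only [sub_zero] at hlim
    exact hlim.congr (fun c => (key c).symm)
  · -- atTop side
    have key : ∀ c : ℝ, (∫ x in (0:ℝ)..c, (f' x : ℂ) * fourierKernel x y)
        = (f c : ℂ) * fourierKernel c y - (f 0 : ℂ)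
          + a * ∫ x in (0:ℝ)..c, (f x : ℂ) * fourierKernel x y := by
      intro c
      rw [ibp_key f f' y hderiv hf'loc 0 c, fourierKernel_zero, mul_one]
    have hlim := ((hbdtop.sub (tendsto_const_nhds :
        Tendsto (fun _ : ℝ => (f 0 : ℂ)) atTop (𝓝 ((f 0 : ℂ))))).add
      (hz2.const_mul a))
    simp only [zero_sub] at hlim
    exact hlim.congr (fun c => (key c).symm)
  · rw [hzsum]; ring
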